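/- For each integer m ≥ 2 set T_m² = −2m·log(0.05) and define a(m) = (2·0.05·0.95) / [ (1 − T_m²/(2m²))^{m−1} − (1 − T_m²/(2m²))^{2m−2} + (m−1)·( (1 − T_m²/m²)^{m−1} − (1 − T_m²/(2m²))^{2m−2} ) ]. Then a(m) converges as m → ∞ to (2·0.05·0.95) / (0.05·0.95 − 0.05²·(log 0.05)²), a number approximately equal to 3.7903. -/

import Mathlib

open Filter Real

/-- The squared DFT-test threshold for `n = 2m`: `T_m² = −2m·log(0.05)`. -/
noncomputable def Tsq (m : ℕ) : ℝ := -2 * m * Real.log 0.05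

/-- The variance-correction factor `a(m)` defined so that the derived variance of the
DFT-test statistic `N₁` equals `0.95·0.05·n/a(m)` with `n = 2m`. -/
noncomputable def aFactor (m : ℕ) : ℝ :=
  (2 * 0.05 * 0.95) /
    ((1 - Tsq m / (2 * (m : ℝ) ^ 2)) ^ (m - 1) -
        (1 - Tsq m / (2 * (m : ℝ) ^ 2)) ^ (2 * m - 2) +
      ((m : ℝ) - 1) * ((1 - Tsq m / (m : ℝ) ^ 2) ^ (m - 1) -
        (1 - Tsq m / (2 * (m : ℝ) ^ 2)) ^ (2 * m - 2)))

private lemma log20_gt : 2.9957 < Real.log 20 := by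
  have hB : Real.exp 3 < 2.7182818286 ^ 3 := by
    rw [show (3:ℝ) = ((3:ℕ):ℝ) * 1 by norm_num, Real.exp_nat_mul]
    exact pow_lt_pow_left₀ Real.exp_one_lt_d9 (Real.exp_pos 1).le (by norm_num)
  have h1 : Real.log (Real.exp 3 / 20) ≤ Real.exp 3 / 20 - 1 :=
    Real.log_le_sub_one_of_pos (by positivity)
  have h2 : Real.log (Real.exp 3 / 20) = 3 - Real.log 20 := by
    rw [Real.log_div (Real.exp_ne_zero 3) (by norm_num), Real.log_exp]
  nlinarith [h1, h2, hB]

private lemma log20_lt : Real.log 20 < 2.9958 := by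
  have hA : (2.7182818283:ℝ) ^ 3 < Real.exp 3 := by
    rw [show (3:ℝ) = ((3:ℕ):ℝ) * 1 by norm_num, Real.exp_nat_mul]
    exact pow_lt_pow_left₀ Real.exp_one_gt_d9 (by norm_num) (by norm_num)
  have h1 : Real.log (20 / Real.exp 3) ≤ 20 / Real.exp 3 - 1 :=
    Real.log_le_sub_one_of_pos (by positivity)
  have h2 : Real.log (20 / Real.exp 3) = Real.log 20 - 3 := by
    rw [Real.log_div (by norm_num) (Real.exp_ne_zero 3), Real.log_exp]
  have h3 : 20 / Real.exp 3 < 20 / 2.7182818283 ^ 3 :=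
    div_lt_div_of_pos_left (by norm_num) (by positivity) hA
  nlinarith [h1, h2, h3]

private lemma log005 : Real.log 0.05 = -Real.log 20 := by
  rw [show (0.05:ℝ) = 20⁻¹ by norm_num, Real.log_inv]

private lemma nat_mul_log (t : ℝ) :
    Tendsto (fun m : ℕ => (m:ℝ) * Real.log (1 + t / m)) atTop (nhds t) :=
  (Real.tendsto_mul_log_one_add_div_atTop t).comp tendsto_natCast_atTop_atTop

private lemma log_to_zero (t : ℝ) :
    Tendsto (fun m : ℕ => Real.log (1 + t / m)) atTop (nhds 0) := by
  have h : Tendsto (fun m : ℕ => 1 + t / m) atTop (nhds 1) := by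
    simpa using tendsto_const_nhds.add (tendsto_const_div_atTop_nhds_zero_nat t)
  have := (Real.continuousAt_log one_ne_zero).tendsto.comp h
  rw [Real.log_one] at this; exact this

private lemma sub_one_mul_log (t : ℝ) :
    Tendsto (fun m : ℕ => ((m:ℝ) - 1) * Real.log (1 + t / m)) atTop (nhds t) := by
  have := (nat_mul_log t).sub (log_to_zero t)
  simp only [sub_zero] at this
  apply this.congr
  intro m; ring

private lemma ratio_to_one (c : ℝ) :
    Tendsto (fun m : ℕ => ((m:ℝ) - 1) / ((m:ℝ) + c)) atTop (nhds 1) := by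
  have hmc : Tendsto (fun m : ℕ => (m:ℝ) + c) atTop atTop :=
    tendsto_atTop_add_const_right _ c tendsto_natCast_atTop_atTop
  have h : Tendsto (fun m : ℕ => (1 + c) / ((m:ℝ) + c)) atTop (nhds 0) :=
    Tendsto.div_atTop tendsto_const_nhds hmc
  have h2 := (tendsto_const_nhds (x := (1:ℝ))).sub h
  simp only [sub_zero] at h2
  apply h2.congr'
  filter_upwards [hmc.eventually_gt_atTop 0] with m hm
  field_simp
  ring

private lemma keyW (c : ℝ) :
    Tendsto (fun m : ℕ => ((m:ℝ) - 1) ^ 2 * Real.log (1 - c^2 / ((m:ℝ) + c)^2))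
      atTop (nhds (-c^2)) := by
  have hmc : Tendsto (fun m : ℕ => (m:ℝ) + c) atTop atTop :=
    tendsto_atTop_add_const_right _ c tendsto_natCast_atTop_atTop
  have h2 : Tendsto (fun m : ℕ => ((m:ℝ) + c) ^ 2) atTop atTop :=
    (tendsto_pow_atTop two_ne_zero).comp hmc
  have h3 := (Real.tendsto_mul_log_one_add_div_atTop (-c^2)).comp h2
  have h4 := ((ratio_to_one c).pow 2).mul h3
  rw [one_pow, one_mul] at h4
  apply h4.congr'
  filter_upwards [hmc.eventually_gt_atTop 0] with m hm
  have hne : ((m:ℝ) + c) ≠ 0 := ne_of_gt hm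
  simp only [Function.comp]
  rw [show 1 + -c^2 / ((m:ℝ)+c)^2 = 1 - c^2/((m:ℝ)+c)^2 by ring]
  field_simp

private lemma pow_eq_exp {x : ℝ} (hx : 0 < x) (k : ℕ) :
    x ^ k = Real.exp (k * Real.log x) := by
  rw [Real.exp_nat_mul, Real.exp_log hx]

private lemma approx_val :
    |(2 * 0.05 * 0.95 : ℝ) / (0.05 * 0.95 - 0.05 ^ 2 * (Real.log 0.05) ^ 2)
      - 3.7903| < 0.001 := by
  have hg1 := log20_gt
  have hg2 := log20_lt
  have hsq : (Real.log 0.05) ^ 2 = (Real.log 20) ^ 2 := by rw [log005]; ring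
  rw [hsq]
  have hsq1 : (Real.log 20) ^ 2 < 8.9749 := by nlinarith
  have hsq2 : (8.9742:ℝ) < (Real.log 20) ^ 2 := by nlinarith
  have hD1 : (0.025062:ℝ) < 0.05 * 0.95 - 0.05 ^ 2 * (Real.log 20) ^ 2 := by nlinarith
  have hD2 : (0.05 * 0.95 - 0.05 ^ 2 * (Real.log 20) ^ 2 : ℝ) < 0.025065 := by nlinarith
  generalize hT : (0.05 * 0.95 - 0.05 ^ 2 * (Real.log 20) ^ 2 : ℝ) = Dv at hD1 hD2 ⊢
  have hDpos : (0:ℝ) < Dv := by linarith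
  rw [abs_sub_lt_iff]
  constructor
  · have h : (2 * 0.05 * 0.95 : ℝ) / Dv < 3.7913 := by
      rw [div_lt_iff₀ hDpos]; nlinarith
    linarith
  · have h : (3.7893 : ℝ) < (2 * 0.05 * 0.95 : ℝ) / Dv := by
      rw [lt_div_iff₀ hDpos]; nlinarith
    linarith

/-- As `m → ∞`, the factor `a(m)` converges to
`(2·0.05·0.95) / (0.05·0.95 − 0.05²·(log 0.05)²)`, a number approximately `3.7903`. -/
theorem aFactor_tendsto :
    Tendsto aFactor atTop
        (nhds ((2 * 0.05 * 0.95) /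
          (0.05 * 0.95 - 0.05 ^ 2 * (Real.log 0.05) ^ 2))) ∧
      |(2 * 0.05 * 0.95) / (0.05 * 0.95 - 0.05 ^ 2 * (Real.log 0.05) ^ 2)
        - 3.7903| < 0.001 := by
  have hg1 := log20_gt
  have hg2 := log20_lt
  set c : ℝ := Real.log 0.05 with hc
  have hcval : c = -Real.log 20 := log005
  have hc1 : -3 < c := by rw [hcval]; linarith
  have hc2 : c < -2.9 := by rw [hcval]; linarith
  -- basic notation
  set q : ℕ → ℝ := fun m => Real.log (1 + c / m) with hq_def
  set r : ℕ → ℝ := fun m => Real.log (1 + 2 * c / m) with hr_def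
  set W : ℕ → ℝ := fun m => ((m:ℝ) - 1) * (r m - 2 * q m) with hW_def
  -- pointwise facts for m ≥ 7
  have facts : ∀ m : ℕ, 7 ≤ m →
      0 < 1 + c / (m:ℝ) ∧ 0 < 1 + 2*c / (m:ℝ) ∧ 0 < (m:ℝ) + c ∧
      r m - 2 * q m = Real.log (1 - c^2 / ((m:ℝ) + c)^2) ∧ W m < 0 := by
    intro m hm
    have hm7 : (7:ℝ) ≤ (m:ℝ) := by exact_mod_cast hm
    have hm0 : (0:ℝ) < m := by linarith
    have hb : 0 < 1 + c / (m:ℝ) := by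
      have h : (-1:ℝ) < c / (m:ℝ) := by
        rw [lt_div_iff₀ hm0]
        nlinarith
      linarith
    have ha : 0 < 1 + 2*c / (m:ℝ) := by
      have h : (-1:ℝ) < 2*c / (m:ℝ) := by
        rw [lt_div_iff₀ hm0]
        nlinarith
      linarith
    have hmc : 0 < (m:ℝ) + c := by linarith
    have harg1 : 0 < 1 - c^2 / ((m:ℝ) + c)^2 := by
      rw [sub_pos, div_lt_one (by positivity)]
      nlinarith
    have harg2 : 1 - c^2 / ((m:ℝ) + c)^2 < 1 := by
      have : 0 < c^2 / ((m:ℝ)+c)^2 := by positivity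
      linarith
    have hid : r m - 2 * q m = Real.log (1 - c^2 / ((m:ℝ) + c)^2) := by
      have h2q : 2 * q m = Real.log ((1 + c/(m:ℝ)) * (1 + c/(m:ℝ))) := by
        rw [Real.log_mul (ne_of_gt hb) (ne_of_gt hb), hq_def]; ring
      rw [hr_def, h2q, ← Real.log_div (ne_of_gt ha) (by positivity)]
      congr 1
      have hmne : (m:ℝ) ≠ 0 := ne_of_gt hm0
      have hmcne : ((m:ℝ) + c) ≠ 0 := ne_of_gt hmc
      field_simp
      ring
    refine ⟨hb, ha, hmc, hid, ?_⟩
    rw [hW_def]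
    simp only
    rw [hid]
    have hlneg : Real.log (1 - c^2 / ((m:ℝ) + c)^2) < 0 := Real.log_neg harg1 harg2
    have : (0:ℝ) < (m:ℝ) - 1 := by linarith
    exact mul_neg_of_pos_of_neg this hlneg
  -- limits
  have hq : Tendsto (fun m : ℕ => ((m:ℝ) - 1) * q m) atTop (nhds c) := sub_one_mul_log c
  have hr : Tendsto (fun m : ℕ => ((m:ℝ) - 1) * r m) atTop (nhds (2*c)) := by
    have := sub_one_mul_log (2*c)
    apply this.congr; intro m; rw [hr_def]
  have hWlim : Tendsto W atTop (nhds 0) := by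
    have h := hr.sub (hq.const_mul 2)
    rw [show 2*c - 2*c = 0 by ring] at h
    apply h.congr; intro m; rw [hW_def]; ring
  have hMW : Tendsto (fun m : ℕ => ((m:ℝ) - 1) * W m) atTop (nhds (-c^2)) := by
    apply (keyW c).congr'
    filter_upwards [eventually_atTop.2 ⟨7, fun m hm => hm⟩] with m hm
    obtain ⟨_, _, _, hid, _⟩ := facts m hm
    rw [hW_def]
    simp only
    rw [hid]; ring
  have hWne : ∀ᶠ m : ℕ in atTop, W m ≠ 0 := by
    filter_upwards [eventually_atTop.2 ⟨7, fun m hm => hm⟩] with m hm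
    exact ne_of_lt (facts m hm).2.2.2.2
  have hslope : Tendsto (fun m : ℕ => (Real.exp (W m) - 1) / W m) atTop (nhds 1) := by
    have hd := Real.hasDerivAt_exp 0
    rw [Real.exp_zero, hasDerivAt_iff_tendsto_slope] at hd
    have hW' : Tendsto W atTop (nhdsWithin 0 {(0:ℝ)}ᶜ) :=
      tendsto_nhdsWithin_iff.mpr ⟨hWlim, hWne.mono fun m h => h⟩
    have := hd.comp hW'
    apply this.congr
    intro m
    simp [Function.comp, slope_def_field, Real.exp_zero]
  -- the limit of the explicit exponential form
  have hF : Tendsto (fun m : ℕ =>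
      Real.exp (((m:ℝ) - 1) * q m) - Real.exp (2 * (((m:ℝ) - 1) * q m)) +
        Real.exp (2 * (((m:ℝ) - 1) * q m)) *
          ((((m:ℝ) - 1) * W m) * ((Real.exp (W m) - 1) / W m)))
      atTop (nhds (Real.exp c - Real.exp (2*c) + Real.exp (2*c) * (-c^2 * 1))) := by
    have hqe : Tendsto (fun m : ℕ => Real.exp (((m:ℝ) - 1) * q m)) atTop (nhds (Real.exp c)) :=
      (Real.continuous_exp.tendsto c).comp hq
    have hve : Tendsto (fun m : ℕ => Real.exp (2 * (((m:ℝ) - 1) * q m))) atTop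
        (nhds (Real.exp (2*c))) :=
      (Real.continuous_exp.tendsto (2*c)).comp (hq.const_mul 2)
    exact (hqe.sub hve).add (hve.mul (hMW.mul hslope))
  -- identify the limit value
  have hec : Real.exp c = 0.05 := Real.exp_log (by norm_num)
  have he2c : Real.exp (2*c) = 0.05 ^ 2 := by
    rw [two_mul, Real.exp_add, hec]; ring
  have hLval : Real.exp c - Real.exp (2*c) + Real.exp (2*c) * (-c^2 * 1)
      = 0.05 * 0.95 - 0.05 ^ 2 * c ^ 2 := by
    rw [hec, he2c]; ring
  rw [hLval] at hF
  -- eventual equality of the denominator with the exponential form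
  have hDen : Tendsto (fun m : ℕ =>
      (1 - Tsq m / (2 * (m : ℝ) ^ 2)) ^ (m - 1) -
        (1 - Tsq m / (2 * (m : ℝ) ^ 2)) ^ (2 * m - 2) +
      ((m : ℝ) - 1) * ((1 - Tsq m / (m : ℝ) ^ 2) ^ (m - 1) -
        (1 - Tsq m / (2 * (m : ℝ) ^ 2)) ^ (2 * m - 2)))
      atTop (nhds (0.05 * 0.95 - 0.05 ^ 2 * c ^ 2)) := by
    apply hF.congr'
    filter_upwards [eventually_atTop.2 ⟨7, fun m hm => hm⟩] with m hm
    obtain ⟨hb, ha, hmc, hid, hWneg⟩ := facts m hm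
    have hm1 : 1 ≤ m := by omega
    have hm72 : (7:ℝ) ≤ (m:ℝ) := by exact_mod_cast hm
    have hm0 : (0:ℝ) < (m:ℝ) := by linarith
    have hWne' : ((m:ℝ) - 1) * (Real.log (1 + 2*c/(m:ℝ)) - 2 * Real.log (1 + c/(m:ℝ))) ≠ 0 := by
      have := ne_of_lt hWneg
      simpa [hW_def, hr_def, hq_def] using this
    have e1 : 1 - Tsq m / (2 * (m:ℝ) ^ 2) = 1 + c / (m:ℝ) := by
      rw [Tsq, ← hc]
      field_simp
      ring
    have e2 : 1 - Tsq m / (m:ℝ) ^ 2 = 1 + 2 * c / (m:ℝ) := by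
      rw [Tsq, ← hc]
      field_simp
      ring
    have cast1 : (((m - 1 : ℕ)):ℝ) = (m:ℝ) - 1 := by
      push_cast [Nat.cast_sub hm1]
      ring
    have cast2 : (((2 * m - 2 : ℕ)):ℝ) = 2 * ((m:ℝ) - 1) := by
      have h2 : 2 ≤ 2 * m := by omega
      push_cast [Nat.cast_sub h2]
      ring
    simp only [hW_def, hr_def, hq_def]
    rw [e1, e2, pow_eq_exp hb (m-1), pow_eq_exp hb (2*m-2), pow_eq_exp ha (m-1), cast1, cast2]
    rw [show (2 * ((m:ℝ) - 1)) * Real.log (1 + c/(m:ℝ))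
        = 2 * (((m:ℝ) - 1) * Real.log (1 + c/(m:ℝ))) by ring]
    have hexp : Real.exp (2 * (((m:ℝ) - 1) * Real.log (1 + c/(m:ℝ)))) *
        Real.exp (((m:ℝ) - 1) * (Real.log (1 + 2*c/(m:ℝ)) - 2 * Real.log (1 + c/(m:ℝ))))
        = Real.exp (((m:ℝ) - 1) * Real.log (1 + 2*c/(m:ℝ))) := by
      rw [← Real.exp_add]
      congr 1
      ring
    set Wv := ((m:ℝ) - 1) * (Real.log (1 + 2*c/(m:ℝ)) - 2 * Real.log (1 + c/(m:ℝ))) with hWv_def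
    rw [← hexp, mul_assoc ((m:ℝ) - 1) Wv, mul_comm Wv ((Real.exp Wv - 1) / Wv),
      div_mul_cancel₀ _ hWne']
    ring
  have hLpos : (0:ℝ) < 0.05 * 0.95 - 0.05 ^ 2 * c ^ 2 := by nlinarith
  constructor
  · have hdiv := Tendsto.div (tendsto_const_nhds (x := (2 * 0.05 * 0.95 : ℝ)))
      hDen (ne_of_gt hLpos)
    apply hdiv.congr
    intro m
    simp only [Pi.div_apply, aFactor]
  · exact approx_val
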